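/- Let f : X' → X be a proper birational morphism with X' nonsingular and X reduced of pure dimension, and let γ, γ' ∈ J_∞(X') be arcs with f_∞(γ) = f_∞(γ'). If γ does not lie in J_∞(V(Jac_f)) ∪ f_∞^{-1}(J_∞(X_sing)), then γ = γ'. -/

import Mathlib

open AlgebraicGeometry CategoryTheory

universe u

/-- Let `f : X' → X` be a proper birational morphism with `X'` nonsingular
and `X` reduced of pure dimension, and let `U = f⁻¹(X_reg) ∖ V(Jac_f)` — an open subset of
`X'` which is the preimage of an open subset of `X` and on which `f` is an isomorphism onto
its (open) image.  If `γ, γ' ∈ J_∞(X')` are arcs with `f_∞(γ) = f_∞(γ')` and `γ` does not lie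
in `J_∞(V(Jac_f)) ∪ f_∞⁻¹(J_∞(X_sing))` (i.e. `γ` does not factor through the closed
complement of `U`), then `γ = γ'`. -/
theorem statement_17 (k : Type u) [Field k] (X X' : Scheme.{u}) (f : X' ⟶ X) [IsProper f]
    [IsReduced X]
    (U : X'.Opens) (V : X.Opens) (hUV : U = f ⁻¹ᵁ V)
    (himm : IsOpenImmersion (U.ι ≫ f))
    (γ γ' : Spec (CommRingCat.of (PowerSeries k)) ⟶ X')
    (hcomp : γ ≫ f = γ' ≫ f)
    (hγ : ¬ (Set.range γ.base ⊆ ((U : Set X'))ᶜ)) :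
    γ = γ' := by
  classical
  -- some point of the arc lies in `U`
  obtain ⟨y, ⟨x, rfl⟩, hyU⟩ : ∃ y ∈ Set.range γ.base, y ∈ (U : Set X') := by
    simpa [Set.subset_def] using hγ
  -- the generic point of `Spec k[[t]]`
  let R := PowerSeries k
  let K := LaurentSeries k
  let ξ : PrimeSpectrum R := ⟨⊥, Ideal.bot_prime⟩
  have hξ : ∀ p : PrimeSpectrum R, ξ ⤳ p := fun p =>
    (PrimeSpectrum.le_iff_specializes ξ p).mp bot_le
  -- `γ` maps the generic point into `U`
  have hγξ : γ.base ξ ∈ (U : Set X') :=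
    ((hξ x).map γ.base.hom.continuous).mem_open U.isOpen hyU
  -- `γ'` maps the generic point into `U` as well, since `U = f⁻¹ V`
  have hγ'ξ : γ'.base ξ ∈ (U : Set X') := by
    have h1 : f.base (γ.base ξ) ∈ (V : Set X) := by
      have := hγξ; rw [hUV] at this; exact this
    have h2 : f.base (γ'.base ξ) = f.base (γ.base ξ) := by
      have := congrArg (fun g : Spec (CommRingCat.of R) ⟶ X => g.base ξ) hcomp
      exact this.symm
    rw [hUV]; show f.base _ ∈ (V : Set X); rw [h2]; exact h1
  -- the inclusion of the generic point
  let ι : Spec (CommRingCat.of K) ⟶ Spec (CommRingCat.of R) :=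
    Spec.map (CommRingCat.ofHom (algebraMap R K))
  have hι : ∀ p : PrimeSpectrum K, ι.base p = ξ := by
    intro p
    have hp : p.asIdeal = ⊥ := (Ideal.eq_bot_or_top p.asIdeal).resolve_right p.2.ne_top
    show PrimeSpectrum.comap (algebraMap R K) p = ξ
    ext r
    simp only [PrimeSpectrum.comap_asIdeal, Ideal.mem_comap, hp, Ideal.mem_bot]
    constructor
    · intro h
      exact (map_eq_zero_iff _ (IsFractionRing.injective R K)).mp h
    · rintro rfl; simp
  -- both restricted arcs land in `U`
  have hrange : ∀ g : Spec (CommRingCat.of R) ⟶ X', g.base ξ ∈ (U : Set X') →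
      Set.range (ι ≫ g).base ⊆ Set.range U.ι.base := by
    intro g hg
    rw [Scheme.Opens.range_ι]
    rintro _ ⟨p, rfl⟩
    have : (ι ≫ g).base p = g.base ξ := by
      show g.base (ι.base p) = _
      exact congrArg (fun q => g.base q) (hι p)
    rw [this]; exact hg
  -- since `U.ι ≫ f` is an open immersion (hence mono), the two restrictions agree
  have hKeq : ι ≫ γ = ι ≫ γ' := by
    have h1 := IsOpenImmersion.lift_fac U.ι (ι ≫ γ) (hrange γ hγξ)
    have h2 := IsOpenImmersion.lift_fac U.ι (ι ≫ γ') (hrange γ' hγ'ξ)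
    have : IsOpenImmersion.lift U.ι (ι ≫ γ) (hrange γ hγξ) =
        IsOpenImmersion.lift U.ι (ι ≫ γ') (hrange γ' hγ'ξ) := by
      have hmono : Mono (U.ι ≫ f) := inferInstance
      apply hmono.right_cancellation
      rw [← Category.assoc, ← Category.assoc, h1, h2, Category.assoc, Category.assoc, hcomp]
    rw [← h1, ← h2, this]
  -- assemble the valuative commutative square and use separatedness
  let S : ValuativeCommSq f :=
    { R := R
      K := K
      i₁ := ι ≫ γ
      i₂ := γ ≫ f
      commSq := ⟨by simp; rfl⟩ }
  have hsep : IsSeparated f := inferInstance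
  have huniq := IsSeparated.valuativeCriterion f S
  let l₁ : S.commSq.LiftStruct := ⟨γ, rfl, rfl⟩
  let l₂ : S.commSq.LiftStruct := ⟨γ', hKeq.symm, hcomp.symm⟩
  exact congrArg CommSq.LiftStruct.l (huniq.elim l₁ l₂)
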